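/- If an infinite binary word z satisfies that both 0·z and 1·z belong to the shift orbit closure of the Fibonacci word, then z equals the Fibonacci word. -/
import Mathlib


/-- The Fibonacci morphism on letters: φ(0)=01, φ(1)=0 (0 = `false`, 1 = `true`). -/
def phi : Bool → List Bool
  | false => [false, true]
  | true  => [false]

/-- The Fibonacci morphism extended to words. -/
def phiW (w : List Bool) : List Bool := w.flatMap phi

/-- The finite word `u` is a prefix of the infinite word `x`. -/
def IsPrefixI (u : List Bool) (x : ℕ → Bool) : Prop :=
  ∀ i, i < u.length → u.getD i false = x i

/-- `f` is the Fibonacci word: every `φ^n(0)` is a prefix of `f`. -/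
def IsFibWord (f : ℕ → Bool) : Prop :=
  ∀ n, IsPrefixI (phiW^[n] [false]) f

/-- The finite word `u` is a factor of the infinite word `x`. -/
def IsFactorI (u : List Bool) (x : ℕ → Bool) : Prop :=
  ∃ k, ∀ i, i < u.length → u.getD i false = x (k + i)

/-- Prepend a letter to an infinite word. -/
def consI (a : Bool) (x : ℕ → Bool) : ℕ → Bool :=
  fun n => if n = 0 then a else x (n - 1)

/-- `x` belongs to the shift orbit closure of the infinite word `w`:
every finite factor of `x` is a factor of `w`. -/
def InOrbitClosure (x w : ℕ → Bool) : Prop :=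
  ∀ u : List Bool, IsFactorI u x → IsFactorI u w


lemma phiW_nil : phiW [] = [] := rfl
lemma phiW_cons (a : Bool) (w : List Bool) : phiW (a :: w) = phi a ++ phiW w := by
  simp [phiW]
lemma phiW_append (a b : List Bool) : phiW (a ++ b) = phiW a ++ phiW b := by
  simp [phiW]

def Fw (n : ℕ) : List Bool := phiW^[n] [false]
def Gw (n : ℕ) : List Bool := phiW^[n] [true]

lemma Fw_succ (n : ℕ) : Fw (n+1) = phiW (Fw n) := by
  simp [Fw, Function.iterate_succ_apply']
lemma Gw_succ (n : ℕ) : Gw (n+1) = Fw n := by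
  have h : phiW [true] = [false] := rfl
  simp [Gw, Fw, Function.iterate_succ_apply, h]

lemma Fw_succ_eq (n : ℕ) : Fw (n+1) = Fw n ++ Gw n := by
  induction n with
  | zero => rfl
  | succ n ih =>
    have hg : phiW (Gw n) = Gw (n+1) := by
      simp [Gw, Function.iterate_succ_apply']
    rw [Fw_succ, ih, phiW_append, ← Fw_succ, hg, ih]

lemma Fw_ne_nil (n : ℕ) : Fw n ≠ [] := by
  induction n with
  | zero => simp [Fw]
  | succ n ih => rw [Fw_succ_eq]; simp [ih]

lemma Gw_ne_nil (n : ℕ) : Gw n ≠ [] := by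
  cases n with
  | zero => simp [Gw]
  | succ n => rw [Gw_succ]; exact Fw_ne_nil n

lemma Fw_prefix (n : ℕ) : Fw n <+: Fw (n+1) := ⟨Gw n, (Fw_succ_eq n).symm⟩

lemma Fw_prefix_le {n m : ℕ} (h : n ≤ m) : Fw n <+: Fw m := by
  induction m with
  | zero => rw [Nat.le_zero.mp h]
  | succ m ih =>
    rcases Nat.lt_or_ge n (m+1) with h' | h'
    · exact (ih (Nat.lt_succ_iff.mp h')).trans (Fw_prefix m)
    · rw [Nat.le_antisymm h h']

lemma Fw_len (n : ℕ) : n < (Fw n).length := by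
  induction n with
  | zero => simp [Fw]
  | succ n ih =>
    rw [Fw_succ_eq, List.length_append]
    have := List.length_pos_iff.mpr (Gw_ne_nil n)
    omega

/-- An occurrence of `false` in a φ-image starts at a block boundary. -/
lemma cut0 : ∀ (s x r : List Bool), phiW s = x ++ false :: r →
    ∃ s₁ s₂, s = s₁ ++ s₂ ∧ x = phiW s₁ ∧ false :: r = phiW s₂ := by
  intro s
  induction s with
  | nil => intro x r h; rw [phiW_nil] at h; simp at h
  | cons a s ih =>
    intro x r h
    match x with
    | [] => exact ⟨[], a :: s, rfl, rfl, by simpa using h.symm⟩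
    | c :: x' =>
      cases a with
      | true =>
        rw [phiW_cons] at h
        simp only [phi, List.cons_append, List.singleton_append] at h
        obtain ⟨hc, h'⟩ := List.cons_eq_cons.mp h
        obtain ⟨s₁, s₂, hs, hx, hr⟩ := ih x' r h'
        exact ⟨true :: s₁, s₂, by rw [hs]; rfl,
          by rw [phiW_cons]; simp [phi, hx, hc], hr⟩
      | false =>
        rw [phiW_cons] at h
        simp only [phi, List.cons_append] at h
        obtain ⟨hc, h'⟩ := List.cons_eq_cons.mp h
        match x' with
        | [] =>
          simp at h'
        | c' :: x'' =>
          obtain ⟨hc', h''⟩ := List.cons_eq_cons.mp (by simpa using h')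
          obtain ⟨s₁, s₂, hs, hx, hr⟩ := ih x'' r h''
          exact ⟨false :: s₁, s₂, by rw [hs]; rfl,
            by rw [phiW_cons]; simp [phi, hx, hc, hc'], hr⟩

/-- An occurrence of `true` in a φ-image ends a block `φ(false) = [false, true]`. -/
lemma cut1 : ∀ (s x r : List Bool), phiW s = x ++ true :: r →
    ∃ s₁ s₂, s = s₁ ++ false :: s₂ ∧ x = phiW s₁ ++ [false] ∧ r = phiW s₂ := by
  intro s
  induction s with
  | nil => intro x r h; rw [phiW_nil] at h; simp at h
  | cons a s ih =>
    intro x r h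
    cases a with
    | true =>
      rw [phiW_cons] at h
      simp only [phi, List.singleton_append] at h
      match x with
      | [] => simp at h
      | c :: x' =>
        obtain ⟨hc, h'⟩ := List.cons_eq_cons.mp h
        obtain ⟨s₁, s₂, hs, hx, hr⟩ := ih x' r h'
        exact ⟨true :: s₁, s₂, by rw [hs]; rfl,
          by rw [phiW_cons]; simp [phi, hx, hc], hr⟩
    | false =>
      rw [phiW_cons] at h
      simp only [phi, List.cons_append] at h
      match x with
      | [] => simp at h
      | [c] =>
        obtain ⟨hc, h'⟩ := List.cons_eq_cons.mp h
        have hr : phiW s = r := by simpa using h'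
        exact ⟨[], s, rfl, by simp [phiW_nil, hc], hr.symm⟩
      | c :: c' :: x'' =>
        obtain ⟨hc, h'⟩ := List.cons_eq_cons.mp h
        obtain ⟨hc', h''⟩ := List.cons_eq_cons.mp (by simpa using h')
        obtain ⟨s₁, s₂, hs, hx, hr⟩ := ih x'' r h''
        exact ⟨false :: s₁, s₂, by rw [hs]; rfl,
          by rw [phiW_cons]; simp [phi, hx, hc, hc'], hr⟩

/-- Decode a word back through φ (greedy, dropping an ambiguous trailing `false`). -/
def Dd : List Bool → List Bool
  | [] => []
  | true :: _ => []
  | [false] => []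
  | false :: true :: r => false :: Dd r
  | false :: false :: r => true :: Dd (false :: r)
  termination_by w => w.length

lemma phiW_head : ∀ (p : List Bool) (c : Bool) (l : List Bool),
    phiW p = c :: l → c = false := by
  intro p c l h
  match p with
  | [] => rw [phiW_nil] at h; exact absurd h (by simp)
  | b :: p' =>
    rw [phiW_cons] at h
    cases b <;> simp [phi] at h <;> tauto

lemma d1 : ∀ (w p : List Bool), w <+: phiW p → Dd w <+: p := by
  intro w
  induction w using Dd.induct with
  | case1 => intro p _; simp [Dd]
  | case2 r => intro p _; simp [Dd]
  | case3 => intro p _; simp [Dd]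
  | case4 r ih =>
    intro p hp
    match p with
    | [] => rw [phiW_nil] at hp; exact absurd hp.length_le (by simp)
    | true :: p' =>
      rw [phiW_cons] at hp
      simp only [phi, List.singleton_append, List.cons_prefix_cons] at hp
      obtain ⟨-, hp⟩ := hp
      obtain ⟨t, ht⟩ := hp
      exact absurd (phiW_head p' _ _ ht.symm) (by simp)
    | false :: p' =>
      rw [phiW_cons] at hp
      simp only [phi, List.cons_append, List.nil_append,
        List.cons_prefix_cons] at hp
      rw [Dd]
      exact List.cons_prefix_cons.mpr ⟨rfl, ih p' hp.2.2⟩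
  | case5 r ih =>
    intro p hp
    match p with
    | [] => rw [phiW_nil] at hp; exact absurd hp.length_le (by simp)
    | true :: p' =>
      rw [phiW_cons] at hp
      simp only [phi, List.singleton_append, List.cons_prefix_cons] at hp
      rw [Dd]
      exact List.cons_prefix_cons.mpr ⟨rfl, ih p' hp.2⟩
    | false :: p' =>
      rw [phiW_cons] at hp
      simp only [phi, List.cons_append, List.nil_append,
        List.cons_prefix_cons] at hp
      exact absurd hp.2.1 (by simp)

lemma d2 : ∀ (w p : List Bool), w <+: phiW p → w <+: phiW (Dd w) ++ [false] := by
  intro w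
  induction w using Dd.induct with
  | case1 => intro p _; simp [Dd]
  | case2 r =>
    intro p hp
    exfalso
    obtain ⟨t, ht⟩ := hp
    exact absurd (phiW_head p _ _ ht.symm) (by simp)
  | case3 => intro p _; simp [Dd, phiW_nil]
  | case4 r ih =>
    intro p hp
    match p with
    | [] => rw [phiW_nil] at hp; exact absurd hp.length_le (by simp)
    | true :: p' =>
      rw [phiW_cons] at hp
      simp only [phi, List.singleton_append, List.cons_prefix_cons] at hp
      obtain ⟨-, hp⟩ := hp
      obtain ⟨t, ht⟩ := hp
      exact absurd (phiW_head p' _ _ ht.symm) (by simp)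
    | false :: p' =>
      rw [phiW_cons] at hp
      simp only [phi, List.cons_append, List.nil_append,
        List.cons_prefix_cons] at hp
      have hx : phiW (false :: Dd r) ++ [false]
          = false :: true :: (phiW (Dd r) ++ [false]) := by
        rw [phiW_cons]; simp [phi]
      rw [Dd, hx]
      exact List.cons_prefix_cons.mpr ⟨rfl, List.cons_prefix_cons.mpr ⟨rfl, ih p' hp.2.2⟩⟩
  | case5 r ih =>
    intro p hp
    match p with
    | [] => rw [phiW_nil] at hp; exact absurd hp.length_le (by simp)
    | true :: p' =>
      rw [phiW_cons] at hp
      simp only [phi, List.singleton_append, List.cons_prefix_cons] at hp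
      have hx : phiW (true :: Dd (false :: r)) ++ [false]
          = false :: (phiW (Dd (false :: r)) ++ [false]) := by
        rw [phiW_cons]; simp [phi]
      rw [Dd, hx]
      exact List.cons_prefix_cons.mpr ⟨rfl, ih p' hp.2⟩
    | false :: p' =>
      rw [phiW_cons] at hp
      simp only [phi, List.cons_append, List.nil_append,
        List.cons_prefix_cons] at hp
      exact absurd hp.2.1 (by simp)

lemma d_le : ∀ (w : List Bool), (Dd w).length ≤ w.length := by
  intro w
  induction w using Dd.induct with
  | case1 => simp [Dd]
  | case2 r => simp [Dd]
  | case3 => simp [Dd]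
  | case4 r ih => rw [Dd]; simp only [List.length_cons]; omega
  | case5 r ih => rw [Dd]; simp only [List.length_cons] at *; omega

lemma d3 : ∀ (r : List Bool), (Dd (false :: r)).length < (false :: r).length := by
  intro r
  match r with
  | [] => simp [Dd]
  | true :: r' =>
    rw [Dd]
    have := d_le r'
    simp only [List.length_cons] at *; omega
  | false :: r' =>
    have h := d3 r'
    rw [Dd]
    simp only [List.length_cons] at *; omega
  termination_by r => r.length

lemma main_aux : ∀ (m : ℕ) (w : List Bool), w.length ≤ m →
    (∃ n, (false :: w) <:+: Fw n) → (∃ n, (true :: w) <:+: Fw n) →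
    ∃ n, w <+: Fw n := by
  intro m
  induction m with
  | zero =>
    intro w hw _ _
    rw [List.length_eq_zero_iff.mp (Nat.le_zero.mp hw)]
    exact ⟨0, List.nil_prefix⟩
  | succ m ih =>
    intro w hw hFac0 hFac1
    match w with
    | [] => exact ⟨0, List.nil_prefix⟩
    | a :: w₀ =>
      -- use the occurrence of true :: w
      obtain ⟨N, hN⟩ := hFac1
      have h1' : (true :: (a :: w₀)) <:+: phiW (Fw N) := by
        rw [← Fw_succ]; exact hN.trans (Fw_prefix N).isInfix
      obtain ⟨x, y, hxy⟩ := h1'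
      have hxy' : phiW (Fw N) = x ++ true :: ((a :: w₀) ++ y) := by
        rw [← hxy]; simp
      obtain ⟨s₁, s₂, hs, hx, hr⟩ := cut1 (Fw N) x ((a :: w₀) ++ y) hxy'
      have hwpre : (a :: w₀) <+: phiW s₂ := ⟨y, hr⟩
      have ha : a = false := phiW_head s₂ a (w₀ ++ y) (by rw [← hr]; rfl)
      subst ha
      -- Fac (false :: Dd w)
      obtain ⟨t, ht⟩ := d1 _ _ hwpre
      have hfac0' : ∃ n, (false :: Dd (false :: w₀)) <:+: Fw n :=
        ⟨N, s₁, t, by rw [hs, ← ht]; simp⟩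
      -- use the occurrence of false :: w
      obtain ⟨M, hM⟩ := hFac0
      have h0' : (false :: (false :: w₀)) <:+: phiW (Fw M) := by
        rw [← Fw_succ]; exact hM.trans (Fw_prefix M).isInfix
      obtain ⟨x', y', hxy0⟩ := h0'
      have hxy0' : phiW (Fw M) = x' ++ false :: ((false :: w₀) ++ y') := by
        rw [← hxy0]; simp
      obtain ⟨t₁, t₂, hts, htx, htr⟩ := cut0 (Fw M) x' ((false :: w₀) ++ y') hxy0'
      have hfac1' : ∃ n, (true :: Dd (false :: w₀)) <:+: Fw n := by
        match t₂, htr with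
        | [], htr => rw [phiW_nil] at htr; exact absurd htr (by simp)
        | false :: t₂', htr =>
          rw [phiW_cons] at htr
          simp only [phi, List.cons_append, List.nil_append] at htr
          obtain ⟨-, htr'⟩ := List.cons_eq_cons.mp htr
          exact absurd (List.cons_eq_cons.mp htr').1 (by simp)
        | true :: t₂', htr =>
          rw [phiW_cons] at htr
          simp only [phi, List.singleton_append] at htr
          obtain ⟨-, htr'⟩ := List.cons_eq_cons.mp htr
          have hpre : (false :: w₀) <+: phiW t₂' := ⟨y', htr'⟩
          obtain ⟨t', ht'⟩ := d1 _ _ hpre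
          exact ⟨M, t₁, t', by rw [hts, ← ht']; simp⟩
      -- apply the induction hypothesis to the decoded word
      have hlen : (Dd (false :: w₀)).length ≤ m := by
        have := d3 w₀
        simp only [List.length_cons] at *
        omega
      obtain ⟨n, hn⟩ := ih (Dd (false :: w₀)) hlen hfac0' hfac1'
      -- extend to cover w
      set d := Dd (false :: w₀) with hd
      have hk : d <+: Fw (max n d.length) :=
        hn.trans (Fw_prefix_le (le_max_left _ _))
      obtain ⟨t0, ht0⟩ := hk
      have ht0ne : t0 ≠ [] := by
        intro hnil
        rw [hnil, List.append_nil] at ht0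
        have := Fw_len (max n d.length)
        rw [← ht0] at this
        have := le_max_right n d.length
        omega
      match t0, ht0, ht0ne with
      | c :: t0', ht0, _ =>
        have hstep : phiW d ++ [false] <+: Fw (max n d.length + 1) := by
          rw [Fw_succ, ← ht0, phiW_append, phiW_cons]
          cases c
          · exact ⟨true :: phiW t0', by simp [phi]⟩
          · exact ⟨phiW t0', by simp [phi]⟩
        exact ⟨max n d.length + 1, (d2 _ _ hwpre).trans hstep⟩


lemma hf_Fw {f : ℕ → Bool} (hf : IsFibWord f) (n : ℕ) :
    ∀ i, i < (Fw n).length → (Fw n).getD i false = f i := hf n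

lemma factor_to_infix {f : ℕ → Bool} (hf : IsFibWord f) (u : List Bool)
    (hu : IsFactorI u f) : ∃ n, u <:+: Fw n := by
  obtain ⟨k, hk⟩ := hu
  refine ⟨k + u.length, ?_⟩
  have hlen : k + u.length ≤ (Fw (k + u.length)).length :=
    le_of_lt (Fw_len _)
  have hu_eq : u = ((Fw (k + u.length)).drop k).take u.length := by
    apply List.ext_getElem
    · rw [List.length_take, List.length_drop]
      omega
    · intro i h1 h2
      rw [List.getElem_take, List.getElem_drop]
      have hik : k + i < (Fw (k + u.length)).length := by omega
      have := hf_Fw hf (k + u.length) (k + i) hik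
      rw [List.getD_eq_getElem _ _ hik] at this
      have h2' := hk i h1
      rw [List.getD_eq_getElem _ _ h1] at h2'
      rw [this, h2']
  have hinf : ((Fw (k + u.length)).drop k).take u.length <:+: Fw (k + u.length) :=
    ((List.take_prefix _ _).isInfix).trans (List.drop_suffix _ _).isInfix
  rw [← hu_eq] at hinf
  exact hinf

lemma prefix_match {f : ℕ → Bool} (hf : IsFibWord f) {u : List Bool} {n : ℕ}
    (h : u <+: Fw n) : ∀ i, i < u.length → u.getD i false = f i := by
  intro i hi
  have hlen : u.length ≤ (Fw n).length := h.length_le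
  have hfw := hf_Fw hf n i (by omega)
  rw [List.getD_eq_getElem _ _ hi, List.getD_eq_getElem _ _ (by omega : i < (Fw n).length)] at *
  rw [← hfw]
  exact h.getElem hi


theorem fib_left_special (f z : ℕ → Bool) (hf : IsFibWord f)
    (h0 : InOrbitClosure (consI false z) f)
    (h1 : InOrbitClosure (consI true z) f) :
    z = f := by
  funext n
  set p := List.ofFn (fun i : Fin (n+1) => z i) with hp
  have hp_len : p.length = n + 1 := by simp [hp]
  have hp_getD : ∀ i, i < n + 1 → p.getD i false = z i := by
    intro i hi
    rw [List.getD_eq_getElem _ _ (by rw [hp_len]; exact hi : i < p.length)]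
    simp only [hp, List.getElem_ofFn]
  have hfac : ∀ a : Bool, IsFactorI (a :: p) (consI a z) := by
    intro a
    refine ⟨0, ?_⟩
    intro i hi
    match i with
    | 0 => simp [consI]
    | j + 1 =>
      simp only [List.length_cons, hp_len] at hi
      have hj : j < n + 1 := by omega
      simp only [List.getD_cons_succ, consI, Nat.zero_add]
      rw [hp_getD j hj]
      simp
  have h0' := factor_to_infix hf _ (h0 _ (hfac false))
  have h1' := factor_to_infix hf _ (h1 _ (hfac true))
  obtain ⟨N, hN⟩ := main_aux p.length p le_rfl h0' h1'
  have := prefix_match hf hN n (by rw [hp_len]; omega)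
  rw [hp_getD n (by omega)] at this
  exact this
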